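/- Let $(A_k)$ be a family of complex $l \times l$ matrices, each diagonalizable as $A_k = \Lambda_k D_k \Lambda_k^{-1}$ with $D_k$ diagonal. Suppose $\|D_k\| \leq 1 + c_1\epsilon$ and $\|\Lambda_{p}^{-1}\Lambda_{p-1}\| \leq 1 + c_2\epsilon$ for all relevant indices, with constants $c_1, c_2$ independent of $\epsilon$ and of the indices, and suppose $\|\Lambda_k\|, \|\Lambda_k^{-1}\|$ are bounded by a constant $M$. Then there exists a constant $C$ (depending only on $c_1, c_2, M$) such that for all $j < k$ with $(k-j)\epsilon \leq 1$, $\|A_k A_{k-1}\cdots A_{j+1}\| \leq C$. -/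
import Mathlib


open Finset

attribute [local instance] Matrix.linftyOpNormedAddCommGroup Matrix.linftyOpNormedRing

/-- The ordered product `A k * A (k-1) * ⋯ * A (j+1)`. -/
def prodDesc {M : Type*} [Monoid M] (A : ℕ → M) (j k : ℕ) : M :=
  ((List.range (k - j)).map (fun i => A (k - i))).prod

lemma prodDesc_succ {Mo : Type*} [Monoid Mo] (A : ℕ → Mo) (j k : ℕ) (h : j ≤ k) :
    prodDesc A j (k + 1) = A (k + 1) * prodDesc A j k := by
  unfold prodDesc
  rw [show k + 1 - j = (k - j) + 1 from by omega, List.range_succ_eq_map]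
  have hfun : (fun i => A (k + 1 - (i + 1))) = fun i => A (k - i) :=
    funext fun i => by congr 1; omega
  simp only [List.map_cons, List.map_map, List.prod_cons, Nat.sub_zero,
    Function.comp_def, hfun]

lemma prodDesc_base {Mo : Type*} [Monoid Mo] (A : ℕ → Mo) (j : ℕ) :
    prodDesc A j (j + 1) = A (j + 1) := by
  unfold prodDesc
  rw [show j + 1 - j = 1 from by omega, List.range_succ, List.range_zero]
  simp

theorem stability_product_bound
    (l : ℕ) (c₁ c₂ M : ℝ) (hc₁ : 0 ≤ c₁) (hc₂ : 0 ≤ c₂) (hM : 0 < M) :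
    ∃ C : ℝ, ∀ ε : ℝ, 0 < ε →
      ∀ A D Λ : ℕ → Matrix (Fin l) (Fin l) ℂ,
        (∀ k, IsUnit (Λ k)) →
        (∀ k, (D k).IsDiag) →
        (∀ k, A k = Λ k * D k * (Λ k)⁻¹) →
        (∀ k, ‖D k‖ ≤ 1 + c₁ * ε) →
        (∀ p, ‖(Λ p)⁻¹ * Λ (p - 1)‖ ≤ 1 + c₂ * ε) →
        (∀ k, ‖Λ k‖ ≤ M ∧ ‖(Λ k)⁻¹‖ ≤ M) →
        ∀ j k : ℕ, j < k → ((k : ℝ) - j) * ε ≤ 1 →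
          ‖prodDesc A j k‖ ≤ C := by
  set c : ℝ := c₁ + c₂ + c₁ * c₂ with hc
  have hc0 : 0 ≤ c := by positivity
  refine ⟨M * Real.exp c * M, ?_⟩
  intro ε hε A D Λ hΛ hD hA hDn hΛtrans hΛb j k hjk hkjε
  have hdet : ∀ m, IsUnit (Λ m).det := fun m => (Matrix.isUnit_iff_isUnit_det _).mp (hΛ m)
  set b : ℝ := (1 + c₁ * ε) * (1 + c₂ * ε) with hb
  have hb1 : (0:ℝ) ≤ 1 + c₁ * ε := by positivity
  have hb2 : (0:ℝ) ≤ 1 + c₂ * ε := by positivity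
  -- key induction
  have key : ∀ m, j < m → ‖(Λ m)⁻¹ * prodDesc A j m * Λ j‖ ≤ b ^ (m - j) := by
    intro m hm
    induction m, hm using Nat.le_induction with
    | base =>
      have heq : (Λ (j+1))⁻¹ * prodDesc A j (j+1) * Λ j
          = D (j+1) * ((Λ (j+1))⁻¹ * Λ j) := by
        rw [prodDesc_base, hA (j+1)]
        simp only [Matrix.mul_assoc]
        rw [Matrix.nonsing_inv_mul_cancel_left _ _ (hdet (j+1))]
      rw [heq, show (j+1) - j = 1 from by omega, pow_one]
      calc ‖D (j+1) * ((Λ (j+1))⁻¹ * Λ j)‖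
          ≤ ‖D (j+1)‖ * ‖(Λ (j+1))⁻¹ * Λ j‖ := norm_mul_le _ _
        _ ≤ (1 + c₁ * ε) * (1 + c₂ * ε) := by
            have := hΛtrans (j+1)
            simp only [Nat.add_sub_cancel] at this
            exact mul_le_mul (hDn (j+1)) this (norm_nonneg _) hb1
    | succ m hm ih =>
      have heq : (Λ (m+1))⁻¹ * prodDesc A j (m+1) * Λ j
          = D (m+1) * ((Λ (m+1))⁻¹ * Λ m) * ((Λ m)⁻¹ * prodDesc A j m * Λ j) := by
        rw [prodDesc_succ A j m (by omega), hA (m+1)]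
        simp only [Matrix.mul_assoc]
        rw [Matrix.nonsing_inv_mul_cancel_left _ _ (hdet (m+1)),
          Matrix.mul_nonsing_inv_cancel_left _ _ (hdet m)]
      rw [heq, show (m+1) - j = (m - j) + 1 from by omega, pow_succ]
      have h1 : ‖D (m+1) * ((Λ (m+1))⁻¹ * Λ m)‖ ≤ b := by
        calc ‖D (m+1) * ((Λ (m+1))⁻¹ * Λ m)‖
            ≤ ‖D (m+1)‖ * ‖(Λ (m+1))⁻¹ * Λ m‖ := norm_mul_le _ _
          _ ≤ b := by
              have := hΛtrans (m+1)
              simp only [Nat.add_sub_cancel] at this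
              exact mul_le_mul (hDn (m+1)) this (norm_nonneg _) hb1
      calc ‖D (m+1) * ((Λ (m+1))⁻¹ * Λ m) * ((Λ m)⁻¹ * prodDesc A j m * Λ j)‖
          ≤ ‖D (m+1) * ((Λ (m+1))⁻¹ * Λ m)‖ * ‖(Λ m)⁻¹ * prodDesc A j m * Λ j‖ :=
            norm_mul_le _ _
        _ ≤ b * b ^ (m - j) := mul_le_mul h1 ih (norm_nonneg _)
            (le_trans (norm_nonneg _) h1)
        _ = b ^ (m - j) * b := by ring
  -- bound on b ^ (k - j)
  have hcast : ((k - j : ℕ) : ℝ) = (k : ℝ) - j := by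
    rw [Nat.cast_sub (le_of_lt hjk)]
  have hn1 : (1:ℝ) ≤ ((k - j : ℕ) : ℝ) := by
    have : 1 ≤ k - j := by omega
    exact_mod_cast this
  have hε1 : ε ≤ 1 := by
    nlinarith [hcast ▸ hkjε]
  have hbc : b ≤ 1 + c * ε := by
    rw [hb, hc]
    nlinarith [mul_nonneg (mul_nonneg hc₁ hc₂) (mul_nonneg hε.le (sub_nonneg.mpr hε1))]
  have hpow : b ^ (k - j) ≤ Real.exp c := by
    calc b ^ (k - j) ≤ (1 + c * ε) ^ (k - j) :=
          pow_le_pow_left₀ (by positivity) hbc _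
      _ ≤ (Real.exp (c * ε)) ^ (k - j) :=
          pow_le_pow_left₀ (by positivity) (by linarith [Real.add_one_le_exp (c * ε)]) _
      _ = Real.exp ((k - j : ℕ) * (c * ε)) := by rw [← Real.exp_nat_mul]
      _ ≤ Real.exp c := by
          apply Real.exp_le_exp.mpr
          have hkj : ((k - j : ℕ) : ℝ) * ε ≤ 1 := by rw [hcast]; exact hkjε
          nlinarith [hkj, hn1]
  -- final assembly
  have hfact : prodDesc A j k = Λ k * ((Λ k)⁻¹ * prodDesc A j k * Λ j) * (Λ j)⁻¹ := by
    simp only [Matrix.mul_assoc]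
    rw [Matrix.mul_nonsing_inv_cancel_left _ _ (hdet k)]
    rw [← Matrix.mul_assoc, Matrix.mul_nonsing_inv_cancel_right _ _ (hdet j)]
  rw [hfact]
  have hΛk := (hΛb k).1
  have hΛj := (hΛb j).2
  calc ‖Λ k * ((Λ k)⁻¹ * prodDesc A j k * Λ j) * (Λ j)⁻¹‖
      ≤ ‖Λ k * ((Λ k)⁻¹ * prodDesc A j k * Λ j)‖ * ‖(Λ j)⁻¹‖ := norm_mul_le _ _
    _ ≤ ‖Λ k‖ * ‖(Λ k)⁻¹ * prodDesc A j k * Λ j‖ * ‖(Λ j)⁻¹‖ := by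
        apply mul_le_mul_of_nonneg_right (norm_mul_le _ _) (norm_nonneg _)
    _ ≤ M * Real.exp c * M := by
        apply mul_le_mul _ hΛj (norm_nonneg _) (by positivity)
        apply mul_le_mul hΛk (le_trans (key k hjk) hpow) (norm_nonneg _) (le_of_lt hM)
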